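/- In a compact Hausdorff space of countable tightness there is no free ω₁-sequence. -/

import Mathlib

open Ordinal Topology

/-- The first uncountable ordinal `ω₁`, as a (well-ordered) type. -/
abbrev Omega1 : Type := (Ordinal.omega 1).ToType

/-- An `ω₁`-sequence is free if for every `α` the initial part `{x_β : β < α}` and
the final part `{x_β : β ≥ α}` have disjoint closures. -/
def FreeSeq {X : Type*} [TopologicalSpace X] (x : Omega1 → X) : Prop :=
  ∀ α : Omega1,
    Disjoint (closure (x '' {β : Omega1 | β < α})) (closure (x '' {β : Omega1 | α ≤ β}))

/-- A space has countable tightness if every point in the closure of a set `A` is in the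
closure of a countable subset of `A`. -/
def CountableTightness (X : Type*) [TopologicalSpace X] : Prop :=
  ∀ A : Set X, ∀ p ∈ closure A, ∃ B ⊆ A, B.Countable ∧ p ∈ closure B

/-- In a compact Hausdorff space of countable tightness there is no free `ω₁`-sequence. -/
theorem stmt6 {X : Type*} [TopologicalSpace X] [CompactSpace X] [T2Space X]
    (h : CountableTightness X) (x : Omega1 → X) : ¬ FreeSeq x := by
  intro hfree
  have hne : Nonempty Omega1 :=
    Ordinal.toType_nonempty_iff_ne_zero.2 (Ordinal.omega_pos 1).ne'
  set F : Omega1 → Set X := fun α => closure (x '' {β : Omega1 | α ≤ β}) with hF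
  have hdir : Directed (· ⊇ ·) F := by
    intro a b
    refine ⟨max a b, ?_, ?_⟩
    · exact closure_mono (Set.image_mono fun β hβ => (le_max_left a b).trans hβ)
    · exact closure_mono (Set.image_mono fun β hβ => (le_max_right a b).trans hβ)
  have hnonempty : ∀ α, (F α).Nonempty := fun α =>
    ⟨x α, subset_closure ⟨α, le_refl α, rfl⟩⟩
  have hcl : ∀ α, IsClosed (F α) := fun α => isClosed_closure
  have hcomp : ∀ α, IsCompact (F α) := fun α => (hcl α).isCompact
  obtain ⟨p, hp⟩ :=
    IsCompact.nonempty_iInter_of_directed_nonempty_isCompact_isClosed F hdir hnonempty hcomp hcl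
  simp only [Set.mem_iInter] at hp
  obtain ⟨α₀⟩ := hne
  have hpA : p ∈ closure (Set.range x) := by
    refine closure_mono ?_ (hp α₀)
    rintro _ ⟨β, -, rfl⟩
    exact ⟨β, rfl⟩
  obtain ⟨B, hBsub, hBc, hpB⟩ := h _ p hpA
  rcases B.eq_empty_or_nonempty with rfl | hBne
  · simp at hpB
  obtain ⟨f, rfl⟩ := Set.Countable.exists_eq_range hBc hBne
  have hex : ∀ n : ℕ, ∃ i : Omega1, x i = f n := fun n => hBsub (Set.mem_range_self n)
  choose i hi using hex
  set e : Set.Iio (ω_ 1) ≃o Omega1 := Ordinal.ToType.mk with he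
  have hlt : ∀ n : ℕ, ((e.symm (i n) : Set.Iio (ω_ 1)) : Ordinal) < (Cardinal.aleph 1).ord := by
    intro n
    rw [Cardinal.ord_aleph]
    exact (e.symm (i n)).2
  have hsup : (⨆ n : ℕ, ((e.symm (i n) : Set.Iio (ω_ 1)) : Ordinal)) < (Cardinal.aleph 1).ord := by
    rw [Cardinal.ord_aleph]
    exact Ordinal.iSup_lt_omega_one (by simpa only [Cardinal.ord_aleph] using hlt)
  set σ : Ordinal := ⨆ n : ℕ, ((e.symm (i n) : Set.Iio (ω_ 1)) : Ordinal) with hσ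
  have hsup' : σ < ω_ 1 := by rwa [Cardinal.ord_aleph] at hsup
  have hsucc : Order.succ σ < ω_ 1 := (Cardinal.isSuccLimit_omega 1).succ_lt hsup' 
  set α : Omega1 := e ⟨Order.succ σ, hsucc⟩ with hα
  have hBlt : Set.range f ⊆ x '' {β : Omega1 | β < α} := by
    rintro _ ⟨n, rfl⟩
    refine ⟨i n, ?_, hi n⟩
    have h1 : ((e.symm (i n) : Set.Iio (ω_ 1)) : Ordinal) ≤ σ :=
      Ordinal.le_iSup (fun n : ℕ => ((e.symm (i n) : Set.Iio (ω_ 1)) : Ordinal)) n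
    have h2 : i n = e (e.symm (i n)) := (e.apply_symm_apply _).symm
    show i n < α
    rw [h2, hα, e.lt_iff_lt]
    exact Subtype.coe_lt_coe.1 (h1.trans_lt (Order.lt_succ σ))
  have hp1 : p ∈ closure (x '' {β : Omega1 | β < α}) := closure_mono hBlt hpB
  exact Set.disjoint_left.1 (hfree α) hp1 (hp α)
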